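/- Let Ã = A + E ∈ ℝ^{m×n} with A = A_r + F, A_r of rank r with compact SVD A_r = W Σ Vᵀ, and rank(A_r(I,J)) = r. Let C̃ = Ã(:,J), Ũ = Ã(I,J), R̃ = Ã(I,:), and write a = ‖(W(I,:))†‖₂, b = ‖(V(J,:))†‖₂. Then ‖A − C̃ Ũ† R̃‖_F ≤ (a + b + 3ab)‖E‖_F + (a + b + 3ab + 1)‖F‖_F + (a + b + ab + 1)‖Ũ†‖₂ (‖E‖_F + ‖F‖_F)². -/

import Mathlib

open Matrix

/-- Frobenius norm of a real matrix. -/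
noncomputable def frobNorm {m n : Type*} [Fintype m] [Fintype n]
    (A : Matrix m n ℝ) : ℝ := Real.sqrt (∑ i, ∑ j, (A i j) ^ 2)

/-- Spectral (operator) norm of a real matrix. -/
noncomputable def specNorm {m n : ℕ} (A : Matrix (Fin m) (Fin n) ℝ) : ℝ :=
  ‖LinearMap.toContinuousLinearMap (Matrix.toEuclideanLin A)‖

/-- `B` is the Moore–Penrose pseudoinverse of `A`. -/
def IsMPInv {m n : ℕ} (A : Matrix (Fin m) (Fin n) ℝ)
    (B : Matrix (Fin n) (Fin m) ℝ) : Prop :=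
  A * B * A = A ∧ B * A * B = B ∧ (A * B)ᵀ = A * B ∧ (B * A)ᵀ = B * A

namespace CURAux

variable {m n k p q r : ℕ}

lemma specNorm_nonneg (A : Matrix (Fin m) (Fin n) ℝ) : 0 ≤ specNorm A := norm_nonneg _

lemma specNorm_apply_le (A : Matrix (Fin m) (Fin n) ℝ) (v : EuclideanSpace ℝ (Fin n)) :
    ‖Matrix.toEuclideanLin A v‖ ≤ specNorm A * ‖v‖ := by
  have h := (LinearMap.toContinuousLinearMap (Matrix.toEuclideanLin A)).le_opNorm v
  simpa [specNorm] using h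

lemma specNorm_le_bound (A : Matrix (Fin m) (Fin n) ℝ) {c : ℝ} (hc : 0 ≤ c)
    (h : ∀ v : EuclideanSpace ℝ (Fin n), ‖Matrix.toEuclideanLin A v‖ ≤ c * ‖v‖) :
    specNorm A ≤ c :=
  ContinuousLinearMap.opNorm_le_bound _ hc (by simpa using h)

lemma tl_mul (A : Matrix (Fin m) (Fin n) ℝ) (B : Matrix (Fin n) (Fin k) ℝ)
    (v : EuclideanSpace ℝ (Fin k)) :
    Matrix.toEuclideanLin (A * B) v = Matrix.toEuclideanLin A (Matrix.toEuclideanLin B v) := by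
  simp [Matrix.toEuclideanLin_apply, Matrix.mulVec_mulVec]

lemma spec_mul (A : Matrix (Fin m) (Fin n) ℝ) (B : Matrix (Fin n) (Fin k) ℝ) :
    specNorm (A * B) ≤ specNorm A * specNorm B := by
  apply specNorm_le_bound _ (mul_nonneg (specNorm_nonneg A) (specNorm_nonneg B))
  intro v
  rw [tl_mul]
  calc ‖Matrix.toEuclideanLin A (Matrix.toEuclideanLin B v)‖
      ≤ specNorm A * ‖Matrix.toEuclideanLin B v‖ := specNorm_apply_le _ _
    _ ≤ specNorm A * (specNorm B * ‖v‖) :=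
        mul_le_mul_of_nonneg_left (specNorm_apply_le _ _) (specNorm_nonneg A)
    _ = specNorm A * specNorm B * ‖v‖ := by ring

lemma inner_tl (A : Matrix (Fin m) (Fin n) ℝ) (x : EuclideanSpace ℝ (Fin n))
    (y : EuclideanSpace ℝ (Fin m)) :
    (inner ℝ (Matrix.toEuclideanLin A x) y : ℝ) = inner ℝ x (Matrix.toEuclideanLin Aᵀ y) := by
  simp only [PiLp.inner_apply, RCLike.inner_apply, conj_trivial,
    Matrix.toEuclideanLin_apply, PiLp.toLp_apply, Matrix.mulVec,
    dotProduct, Matrix.transpose_apply, WithLp.ofLp_toLp]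
  simp only [Finset.sum_mul, Finset.mul_sum]
  rw [Finset.sum_comm]
  refine Finset.sum_congr rfl fun i _ => Finset.sum_congr rfl fun j _ => ?_
  ring

lemma cancel_sq {t s : ℝ} (ht : 0 ≤ t) (hs : 0 ≤ s) (h : t ^ 2 ≤ s * t) : t ≤ s := by
  rcases ht.eq_or_lt with h0 | h0
  · exact h0 ▸ hs
  · have : t * t ≤ s * t := by nlinarith
    exact le_of_mul_le_mul_right this h0

lemma specNorm_transpose_le (A : Matrix (Fin m) (Fin n) ℝ) : specNorm Aᵀ ≤ specNorm A := by
  apply specNorm_le_bound _ (specNorm_nonneg A)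
  intro v
  have h2 : ‖Matrix.toEuclideanLin Aᵀ v‖ ^ 2
      = inner ℝ v (Matrix.toEuclideanLin A (Matrix.toEuclideanLin Aᵀ v)) := by
    rw [← real_inner_self_eq_norm_sq, inner_tl, Matrix.transpose_transpose]
  have h3 : ‖Matrix.toEuclideanLin Aᵀ v‖ ^ 2
      ≤ (specNorm A * ‖v‖) * ‖Matrix.toEuclideanLin Aᵀ v‖ := by
    rw [h2]
    calc (inner ℝ v (Matrix.toEuclideanLin A (Matrix.toEuclideanLin Aᵀ v)) : ℝ)
        ≤ ‖v‖ * ‖Matrix.toEuclideanLin A (Matrix.toEuclideanLin Aᵀ v)‖ := real_inner_le_norm _ _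
      _ ≤ ‖v‖ * (specNorm A * ‖Matrix.toEuclideanLin Aᵀ v‖) :=
          mul_le_mul_of_nonneg_left (specNorm_apply_le _ _) (norm_nonneg v)
      _ = (specNorm A * ‖v‖) * ‖Matrix.toEuclideanLin Aᵀ v‖ := by ring
  exact cancel_sq (norm_nonneg _) (mul_nonneg (specNorm_nonneg A) (norm_nonneg v)) h3

lemma specNorm_transpose (A : Matrix (Fin m) (Fin n) ℝ) : specNorm Aᵀ = specNorm A := by
  refine le_antisymm (specNorm_transpose_le A) ?_
  have := specNorm_transpose_le Aᵀ
  rwa [Matrix.transpose_transpose] at this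

lemma specNorm_proj_le_one (P : Matrix (Fin k) (Fin k) ℝ) (hsym : Pᵀ = P)
    (hidem : P * P = P) : specNorm P ≤ 1 := by
  apply specNorm_le_bound _ zero_le_one
  intro v
  have h2 : ‖Matrix.toEuclideanLin P v‖ ^ 2 = inner ℝ v (Matrix.toEuclideanLin P v) := by
    rw [← real_inner_self_eq_norm_sq, inner_tl, ← tl_mul, hsym, hidem]
  have h3 : ‖Matrix.toEuclideanLin P v‖ ^ 2 ≤ (1 * ‖v‖) * ‖Matrix.toEuclideanLin P v‖ := by
    rw [h2, one_mul]
    exact real_inner_le_norm _ _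
  exact cancel_sq (norm_nonneg _) (mul_nonneg zero_le_one (norm_nonneg v)) h3

lemma specNorm_orthonormal (V : Matrix (Fin m) (Fin r) ℝ) (h : Vᵀ * V = 1) :
    specNorm V ≤ 1 := by
  apply specNorm_le_bound _ zero_le_one
  intro v
  have h1 : Matrix.toEuclideanLin (1 : Matrix (Fin r) (Fin r) ℝ) v = v := by
    simp [Matrix.toEuclideanLin_apply, Matrix.one_mulVec]
  have h2 : ‖Matrix.toEuclideanLin V v‖ ^ 2 = ‖v‖ ^ 2 := by
    rw [← real_inner_self_eq_norm_sq, inner_tl, ← tl_mul, h, h1, real_inner_self_eq_norm_sq]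
  have h4 : ‖Matrix.toEuclideanLin V v‖ = ‖v‖ := by
    rw [← Real.sqrt_sq (norm_nonneg (Matrix.toEuclideanLin V v)), h2,
      Real.sqrt_sq (norm_nonneg v)]
  rw [h4, one_mul]

/-! ### Frobenius norm basics -/

noncomputable def matE (A : Matrix (Fin m) (Fin n) ℝ) : EuclideanSpace ℝ (Fin m × Fin n) :=
  (WithLp.equiv 2 _).symm (fun p => A p.1 p.2)

lemma frobNorm_eq_matE (A : Matrix (Fin m) (Fin n) ℝ) : frobNorm A = ‖matE A‖ := by
  rw [EuclideanSpace.norm_eq]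
  unfold frobNorm matE
  congr 1
  rw [Fintype.sum_prod_type (f := fun p : Fin m × Fin n =>
    ‖(WithLp.equiv 2 (Fin m × Fin n → ℝ)).symm (fun p => A p.1 p.2) p‖ ^ 2)]
  refine Finset.sum_congr rfl fun i _ => Finset.sum_congr rfl fun j _ => ?_
  simp [PiLp.toLp_apply, Real.norm_eq_abs, sq_abs]

lemma matE_add (A B : Matrix (Fin m) (Fin n) ℝ) : matE (A + B) = matE A + matE B := rfl

lemma matE_sub (A B : Matrix (Fin m) (Fin n) ℝ) : matE (A - B) = matE A - matE B := rfl

lemma matE_neg (A : Matrix (Fin m) (Fin n) ℝ) : matE (-A) = -matE A := rfl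

lemma frobNorm_nonneg (A : Matrix (Fin m) (Fin n) ℝ) : 0 ≤ frobNorm A := Real.sqrt_nonneg _

lemma frobNorm_add_le (A B : Matrix (Fin m) (Fin n) ℝ) :
    frobNorm (A + B) ≤ frobNorm A + frobNorm B := by
  rw [frobNorm_eq_matE, frobNorm_eq_matE, frobNorm_eq_matE, matE_add]
  exact norm_add_le _ _

lemma frobNorm_sub_le (A B : Matrix (Fin m) (Fin n) ℝ) :
    frobNorm (A - B) ≤ frobNorm A + frobNorm B := by
  rw [frobNorm_eq_matE, frobNorm_eq_matE, frobNorm_eq_matE, matE_sub]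
  exact norm_sub_le _ _

lemma frobNorm_neg (A : Matrix (Fin m) (Fin n) ℝ) : frobNorm (-A) = frobNorm A := by
  rw [frobNorm_eq_matE, frobNorm_eq_matE, matE_neg, norm_neg]


/-! ### columns / rows -/

noncomputable def colE (B : Matrix (Fin m) (Fin n) ℝ) (j : Fin n) :
    EuclideanSpace ℝ (Fin m) := (WithLp.equiv 2 _).symm (fun i => B i j)

noncomputable def rowE (B : Matrix (Fin m) (Fin n) ℝ) (i : Fin m) :
    EuclideanSpace ℝ (Fin n) := (WithLp.equiv 2 _).symm (fun j => B i j)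

lemma norm_colE_sq (B : Matrix (Fin m) (Fin n) ℝ) (j : Fin n) :
    ‖colE B j‖ ^ 2 = ∑ i, (B i j) ^ 2 := by
  rw [EuclideanSpace.norm_eq, Real.sq_sqrt (by positivity)]
  refine Finset.sum_congr rfl fun i _ => ?_
  simp [colE, PiLp.toLp_apply, Real.norm_eq_abs, sq_abs]

lemma norm_rowE_sq (B : Matrix (Fin m) (Fin n) ℝ) (i : Fin m) :
    ‖rowE B i‖ ^ 2 = ∑ j, (B i j) ^ 2 := by
  rw [EuclideanSpace.norm_eq, Real.sq_sqrt (by positivity)]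
  refine Finset.sum_congr rfl fun j _ => ?_
  simp [rowE, PiLp.toLp_apply, Real.norm_eq_abs, sq_abs]

lemma frobNorm_cols (B : Matrix (Fin m) (Fin n) ℝ) :
    frobNorm B = Real.sqrt (∑ j, ‖colE B j‖ ^ 2) := by
  unfold frobNorm
  congr 1
  rw [Finset.sum_comm]
  exact Finset.sum_congr rfl fun j _ => (norm_colE_sq B j).symm

lemma frobNorm_rows (B : Matrix (Fin m) (Fin n) ℝ) :
    frobNorm B = Real.sqrt (∑ i, ‖rowE B i‖ ^ 2) := by
  unfold frobNorm
  congr 1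
  exact Finset.sum_congr rfl fun i _ => (norm_rowE_sq B i).symm

lemma colE_mul (A : Matrix (Fin m) (Fin n) ℝ) (B : Matrix (Fin n) (Fin k) ℝ) (j : Fin k) :
    colE (A * B) j = Matrix.toEuclideanLin A (colE B j) := by
  unfold colE
  simp only [WithLp.equiv_symm_apply]
  rw [Matrix.toEuclideanLin_apply_piLp_toLp]
  congr 1

lemma rowE_mul (A : Matrix (Fin m) (Fin n) ℝ) (B : Matrix (Fin n) (Fin k) ℝ) (i : Fin m) :
    rowE (A * B) i = Matrix.toEuclideanLin Bᵀ (rowE A i) := by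
  unfold rowE
  simp only [WithLp.equiv_symm_apply]
  rw [Matrix.toEuclideanLin_apply_piLp_toLp]
  congr 1
  ext j
  simp only [Matrix.mul_apply, Matrix.mulVec, dotProduct, Matrix.transpose_apply]
  exact Finset.sum_congr rfl fun x _ => mul_comm _ _

lemma frob_spec_mul (A : Matrix (Fin m) (Fin n) ℝ) (B : Matrix (Fin n) (Fin k) ℝ) :
    frobNorm (A * B) ≤ specNorm A * frobNorm B := by
  rw [frobNorm_cols, frobNorm_cols]
  have h1 : ∑ j, ‖colE (A * B) j‖ ^ 2 ≤ (specNorm A) ^ 2 * ∑ j, ‖colE B j‖ ^ 2 := by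
    rw [Finset.mul_sum]
    refine Finset.sum_le_sum fun j _ => ?_
    rw [colE_mul]
    calc ‖Matrix.toEuclideanLin A (colE B j)‖ ^ 2
        ≤ (specNorm A * ‖colE B j‖) ^ 2 :=
          pow_le_pow_left₀ (norm_nonneg _) (specNorm_apply_le _ _) 2
      _ = specNorm A ^ 2 * ‖colE B j‖ ^ 2 := by ring
  calc Real.sqrt (∑ j, ‖colE (A * B) j‖ ^ 2)
      ≤ Real.sqrt ((specNorm A) ^ 2 * ∑ j, ‖colE B j‖ ^ 2) := Real.sqrt_le_sqrt h1
    _ = specNorm A * Real.sqrt (∑ j, ‖colE B j‖ ^ 2) := by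
        rw [Real.sqrt_mul (sq_nonneg _), Real.sqrt_sq (specNorm_nonneg _)]

lemma frob_mul_spec (A : Matrix (Fin m) (Fin n) ℝ) (B : Matrix (Fin n) (Fin k) ℝ) :
    frobNorm (A * B) ≤ frobNorm A * specNorm B := by
  rw [frobNorm_rows, frobNorm_rows]
  have h1 : ∑ i, ‖rowE (A * B) i‖ ^ 2 ≤ (specNorm Bᵀ) ^ 2 * ∑ i, ‖rowE A i‖ ^ 2 := by
    rw [Finset.mul_sum]
    refine Finset.sum_le_sum fun i _ => ?_
    rw [rowE_mul]
    calc ‖Matrix.toEuclideanLin Bᵀ (rowE A i)‖ ^ 2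
        ≤ (specNorm Bᵀ * ‖rowE A i‖) ^ 2 :=
          pow_le_pow_left₀ (norm_nonneg _) (specNorm_apply_le _ _) 2
      _ = specNorm Bᵀ ^ 2 * ‖rowE A i‖ ^ 2 := by ring
  calc Real.sqrt (∑ i, ‖rowE (A * B) i‖ ^ 2)
      ≤ Real.sqrt ((specNorm Bᵀ) ^ 2 * ∑ i, ‖rowE A i‖ ^ 2) := Real.sqrt_le_sqrt h1
    _ = specNorm Bᵀ * Real.sqrt (∑ i, ‖rowE A i‖ ^ 2) := by
        rw [Real.sqrt_mul (sq_nonneg _), Real.sqrt_sq (specNorm_nonneg _)]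
    _ = Real.sqrt (∑ i, ‖rowE A i‖ ^ 2) * specNorm B := by
        rw [specNorm_transpose]; ring

lemma frob_mul_frob (A : Matrix (Fin m) (Fin n) ℝ) (B : Matrix (Fin n) (Fin k) ℝ) :
    frobNorm (A * B) ≤ frobNorm A * frobNorm B := by
  unfold frobNorm
  rw [← Real.sqrt_mul (by positivity)]
  apply Real.sqrt_le_sqrt
  calc ∑ i, ∑ j, ((A * B) i j) ^ 2
      ≤ ∑ i, ∑ j, (∑ x, (A i x) ^ 2) * (∑ x, (B x j) ^ 2) := by
        refine Finset.sum_le_sum fun i _ => Finset.sum_le_sum fun j _ => ?_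
        rw [Matrix.mul_apply]
        exact Finset.sum_mul_sq_le_sq_mul_sq _ _ _
    _ = (∑ i, ∑ x, (A i x) ^ 2) * (∑ x, ∑ j, (B x j) ^ 2) := by
        rw [Finset.sum_mul]
        refine Finset.sum_congr rfl fun i _ => ?_
        rw [← Finset.mul_sum]
        congr 1
        exact Finset.sum_comm

lemma sum_comp_le {a b : ℕ} (g : Fin a → Fin b) (hg : Function.Injective g)
    (h : Fin b → ℝ) (hh : ∀ x, 0 ≤ h x) : ∑ i, h (g i) ≤ ∑ x, h x := by
  classical
  calc ∑ i, h (g i) = ∑ x ∈ Finset.univ.image g, h x :=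
        (Finset.sum_image (fun a _ b _ hab => hg hab)).symm
    _ ≤ ∑ x, h x :=
        Finset.sum_le_sum_of_subset_of_nonneg (Finset.subset_univ _) fun x _ _ => hh x

lemma frobNorm_submatrix_le (X : Matrix (Fin m) (Fin n) ℝ) (g : Fin p → Fin m)
    (f : Fin q → Fin n) (hg : Function.Injective g) (hf : Function.Injective f) :
    frobNorm (X.submatrix g f) ≤ frobNorm X := by
  unfold frobNorm
  apply Real.sqrt_le_sqrt
  calc ∑ i, ∑ j, (X.submatrix g f i j) ^ 2
      = ∑ i, ∑ j, (X (g i) (f j)) ^ 2 := rfl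
    _ ≤ ∑ i, ∑ b, (X (g i) b) ^ 2 := by
        refine Finset.sum_le_sum fun i _ => ?_
        exact sum_comp_le f hf (fun b => (X (g i) b) ^ 2) (fun _ => sq_nonneg _)
    _ ≤ ∑ a, ∑ b, (X a b) ^ 2 :=
        sum_comp_le g hg (fun a => ∑ b, (X a b) ^ 2)
          (fun _ => Finset.sum_nonneg fun _ _ => sq_nonneg _)


lemma submatrix_add' (A B : Matrix (Fin m) (Fin n) ℝ) (g : Fin p → Fin m)
    (f : Fin q → Fin n) : (A + B).submatrix g f = A.submatrix g f + B.submatrix g f := by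
  ext i j; simp

/-! ### chain helpers -/

lemma frob_spec_chain {cA cB : ℝ} (A : Matrix (Fin m) (Fin n) ℝ) (B : Matrix (Fin n) (Fin k) ℝ)
    (hA : specNorm A ≤ cA) (hB : frobNorm B ≤ cB) : frobNorm (A * B) ≤ cA * cB :=
  (frob_spec_mul A B).trans
    (mul_le_mul hA hB (frobNorm_nonneg _) ((specNorm_nonneg _).trans hA))

lemma frob_chain_spec {cA cB : ℝ} (A : Matrix (Fin m) (Fin n) ℝ) (B : Matrix (Fin n) (Fin k) ℝ)
    (hA : frobNorm A ≤ cA) (hB : specNorm B ≤ cB) : frobNorm (A * B) ≤ cA * cB :=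
  (frob_mul_spec A B).trans
    (mul_le_mul hA hB (specNorm_nonneg _) ((frobNorm_nonneg _).trans hA))

lemma frob_frob_chain {cA cB : ℝ} (A : Matrix (Fin m) (Fin n) ℝ) (B : Matrix (Fin n) (Fin k) ℝ)
    (hA : frobNorm A ≤ cA) (hB : frobNorm B ≤ cB) : frobNorm (A * B) ≤ cA * cB :=
  (frob_mul_frob A B).trans
    (mul_le_mul hA hB (frobNorm_nonneg _) ((frobNorm_nonneg _).trans hA))

/-! ### pseudoinverse of full column rank matrix is a left inverse -/

lemma mp_left_inv (X : Matrix (Fin p) (Fin r) ℝ) (Y : Matrix (Fin r) (Fin p) ℝ)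
    (h1 : X * Y * X = X) (hr : X.rank = r) : Y * X = 1 := by
  set P := Y * X with hP
  have hPP : P * P = P := by
    rw [hP, Matrix.mul_assoc, ← Matrix.mul_assoc X Y X, h1]
  have hXP : X * P = X := by
    rw [hP, ← Matrix.mul_assoc, h1]
  have hrP : P.rank = r := by
    refine le_antisymm ((Matrix.rank_le_card_width P).trans (by simp)) ?_
    calc r = X.rank := hr.symm
      _ = (X * P).rank := by rw [hXP]
      _ ≤ P.rank := Matrix.rank_mul_le_right _ _
  have hrange : LinearMap.range P.mulVecLin = ⊤ := by
    apply Submodule.eq_top_of_finrank_eq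
    have h2 : Module.finrank ℝ (LinearMap.range P.mulVecLin) = r := hrP
    rw [h2, Module.finrank_pi]
    simp
  have hsurj : Function.Surjective P.mulVecLin := LinearMap.range_eq_top.1 hrange
  have hid : ∀ y, P.mulVec y = y := by
    intro y
    obtain ⟨x, hx⟩ := hsurj y
    have hx' : P.mulVec x = y := hx
    have h3 : P.mulVec (P.mulVec x) = P.mulVec x := by
      rw [Matrix.mulVec_mulVec, hPP]
    rw [← hx', h3]
  ext i j
  have h4 := congrFun (hid (Pi.single j 1)) i
  rw [Matrix.mulVec_single] at h4
  simp only [Pi.smul_apply, MulOpposite.op_one, one_smul, Matrix.col_apply] at h4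
  rw [h4, Matrix.one_apply, Pi.single_apply]

end CURAux

/-- `B` is the `τ`-truncated Moore–Penrose pseudoinverse of `A`: singular values
of `A` below `τ` are set to zero before pseudoinverting. -/
def IsTruncatedPinv {m n : ℕ} (A : Matrix (Fin m) (Fin n) ℝ) (τ : ℝ)
    (B : Matrix (Fin n) (Fin m) ℝ) : Prop :=
  ∃ (r : ℕ) (W : Matrix (Fin m) (Fin r) ℝ) (V : Matrix (Fin n) (Fin r) ℝ)
    (σ : Fin r → ℝ),
    Wᵀ * W = 1 ∧ Vᵀ * V = 1 ∧ (∀ i, 0 < σ i) ∧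
    A = W * Matrix.diagonal σ * Vᵀ ∧
    B = V * Matrix.diagonal (fun i => if τ ≤ σ i then (σ i)⁻¹ else 0) * Wᵀ

/-- `B` is `A` with its singular values below `τ` set to zero. -/
def IsTruncation {m n : ℕ} (A : Matrix (Fin m) (Fin n) ℝ) (τ : ℝ)
    (B : Matrix (Fin m) (Fin n) ℝ) : Prop :=
  ∃ (r : ℕ) (W : Matrix (Fin m) (Fin r) ℝ) (V : Matrix (Fin n) (Fin r) ℝ)
    (σ : Fin r → ℝ),
    Wᵀ * W = 1 ∧ Vᵀ * V = 1 ∧ (∀ i, 0 < σ i) ∧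
    A = W * Matrix.diagonal σ * Vᵀ ∧
    B = W * Matrix.diagonal (fun i => if τ ≤ σ i then σ i else 0) * Vᵀ

set_option maxHeartbeats 4000000 in
open CURAux in
/-- noisy cross approximation error bound, `Ã = A + E`, `A = A_r + F`. -/
theorem noisy_cross_approx_bound {m n r p q : ℕ}
    (A Ar F E : Matrix (Fin m) (Fin n) ℝ)
    (W : Matrix (Fin m) (Fin r) ℝ) (σ : Fin r → ℝ) (V : Matrix (Fin n) (Fin r) ℝ)
    (hW : Wᵀ * W = 1) (hV : Vᵀ * V = 1) (hσ : ∀ i, 0 < σ i)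
    (hAr : Ar = W * Matrix.diagonal σ * Vᵀ)
    (hA : A = Ar + F)
    (g : Fin p → Fin m) (f : Fin q → Fin n)
    (hg : Function.Injective g) (hf : Function.Injective f)
    (hrankU : (Ar.submatrix g f).rank = r)
    (Udag : Matrix (Fin q) (Fin p) ℝ) (hUdag : IsMPInv ((A + E).submatrix g f) Udag)
    (Wdag : Matrix (Fin r) (Fin p) ℝ) (hWdag : IsMPInv (W.submatrix g id) Wdag)
    (Vdag : Matrix (Fin r) (Fin q) ℝ) (hVdag : IsMPInv (V.submatrix f id) Vdag) :
    frobNorm (A - (A + E).submatrix id f * Udag * (A + E).submatrix g id)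
      ≤ (specNorm Wdag + specNorm Vdag + 3 * specNorm Wdag * specNorm Vdag)
          * frobNorm E
        + (specNorm Wdag + specNorm Vdag + 3 * specNorm Wdag * specNorm Vdag + 1)
          * frobNorm F
        + (specNorm Wdag + specNorm Vdag + specNorm Wdag * specNorm Vdag + 1)
          * specNorm Udag * (frobNorm E + frobNorm F) ^ 2 := by
  classical
  set a := specNorm Wdag with hadef
  set b := specNorm Vdag with hbdef
  set u := specNorm Udag with hudef
  set S := Matrix.diagonal σ with hSdef
  set WI := W.submatrix g id with hWIdef
  set VJ := V.submatrix f id with hVJdef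
  have ha0 : 0 ≤ a := specNorm_nonneg _
  have hb0 : 0 ≤ b := specNorm_nonneg _
  have hu0 : 0 ≤ u := specNorm_nonneg _
  have hfE0 : 0 ≤ frobNorm E := frobNorm_nonneg _
  have hfF0 : 0 ≤ frobNorm F := frobNorm_nonneg _
  have heps0 : 0 ≤ frobNorm E + frobNorm F := add_nonneg hfE0 hfF0
  -- submatrices of Ar
  have hArsub : ∀ {p' q' : ℕ} (g' : Fin p' → Fin m) (f' : Fin q' → Fin n),
      Ar.submatrix g' f' = (W.submatrix g' id) * S * (V.submatrix f' id)ᵀ := by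
    intro p' q' g' f'
    rw [hAr, Matrix.submatrix_mul (W * S) Vᵀ g' id f' Function.bijective_id,
      Matrix.submatrix_mul W S g' id id Function.bijective_id,
      Matrix.submatrix_id_id, ← Matrix.transpose_submatrix]
  -- left inverses
  have hWl : Wdag * WI = 1 := by
    refine mp_left_inv WI Wdag hWdag.1 ?_
    refine le_antisymm ((Matrix.rank_le_card_width WI).trans (by simp)) ?_
    calc r = (Ar.submatrix g f).rank := hrankU.symm
      _ = (WI * (S * VJᵀ)).rank := by
          rw [hArsub g f, ← hWIdef, ← hVJdef, Matrix.mul_assoc]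
      _ ≤ WI.rank := Matrix.rank_mul_le_left _ _
  have hVl : Vdag * VJ = 1 := by
    refine mp_left_inv VJ Vdag hVdag.1 ?_
    refine le_antisymm ((Matrix.rank_le_card_width VJ).trans (by simp)) ?_
    calc r = (Ar.submatrix g f).rank := hrankU.symm
      _ = ((WI * S) * VJᵀ).rank := by rw [hArsub g f, ← hWIdef, ← hVJdef]
      _ ≤ VJᵀ.rank := Matrix.rank_mul_le_right _ _
      _ = VJ.rank := Matrix.rank_transpose _
  have hVr : VJᵀ * Vdagᵀ = 1 := by
    rw [← Matrix.transpose_mul, hVl, Matrix.transpose_one]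
  -- noise matrices
  set Ed := F + E with hEddef
  have hAE : A + E = Ar + Ed := by rw [hA, hEddef, add_assoc]
  set E1 := Ed.submatrix g f with hE1def
  set E2 := Ed.submatrix id f with hE2def
  set E3 := Ed.submatrix g id with hE3def
  set Ut := (A + E).submatrix g f with hUtdef
  set Ct := (A + E).submatrix id f with hCtdef
  set Rt := (A + E).submatrix g id with hRtdef
  obtain ⟨hU1, hU2, hU3, hU4⟩ := hUdag
  set U := WI * S * VJᵀ with hUdef
  set K := W * Wdag with hKdef
  set L := Vdagᵀ * Vᵀ with hLdef
  have hUt : Ut = U + E1 := by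
    rw [hUtdef, hAE, submatrix_add', hArsub g f, ← hWIdef, ← hVJdef, ← hE1def, ← hUdef]
  have hC0 : Ct = W * S * VJᵀ + E2 := by
    rw [hCtdef, hAE, submatrix_add', hArsub id f, Matrix.submatrix_id_id,
      ← hVJdef, ← hE2def]
  have hR0 : Rt = WI * S * Vᵀ + E3 := by
    rw [hRtdef, hAE, submatrix_add', hArsub g id, Matrix.submatrix_id_id,
      ← hWIdef, ← hE3def]
  have hU_eq : U = Ut - E1 := by rw [hUt, add_sub_cancel_right]
  have hKU : K * U = W * S * VJᵀ := by
    rw [hKdef, hUdef]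
    calc W * Wdag * (WI * S * VJᵀ) = W * (Wdag * WI) * (S * VJᵀ) := by
          simp only [Matrix.mul_assoc]
      _ = W * (S * VJᵀ) := by rw [hWl, Matrix.mul_one]
      _ = W * S * VJᵀ := by simp only [Matrix.mul_assoc]
  have hUL : U * L = WI * S * Vᵀ := by
    rw [hUdef, hLdef]
    calc WI * S * VJᵀ * (Vdagᵀ * Vᵀ) = WI * S * (VJᵀ * Vdagᵀ) * Vᵀ := by
          simp only [Matrix.mul_assoc]
      _ = WI * S * Vᵀ := by rw [hVr, Matrix.mul_one]
  have hArKUL : Ar = K * U * L := by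
    have h6 : K * U * L = W * S * Vᵀ := by
      rw [hKU, hLdef]
      calc W * S * VJᵀ * (Vdagᵀ * Vᵀ) = W * S * (VJᵀ * Vdagᵀ) * Vᵀ := by
            simp only [Matrix.mul_assoc]
        _ = W * S * Vᵀ := by rw [hVr, Matrix.mul_one]
    rw [hAr]; exact h6.symm
  have hC : Ct = K * U + E2 := by rw [hC0, ← hKU]
  have hR : Rt = U * L + E3 := by rw [hR0, ← hUL]
  have hA_eq : A = K * U * L + F := by rw [hA, hArKUL]
  -- the key algebraic identity
  have key : A - Ct * Udag * Rt
      = F + (K * Ut * L - K * (Ut * Udag * Ut) * L)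
        + (-(K * (E1 * ((1 - Udag * Ut) * L))) + K * ((Ut * Udag) * (E1 * L))
           - K * (E1 * (Udag * (E1 * L))) - E2 * ((Udag * Ut) * L)
           + E2 * (Udag * (E1 * L)) - K * ((Ut * Udag) * E3)
           + K * (E1 * (Udag * E3)) - E2 * (Udag * E3)) := by
    rw [hA_eq, hC, hR, hU_eq]
    simp only [Matrix.mul_add, Matrix.add_mul, Matrix.mul_sub, Matrix.sub_mul,
      Matrix.mul_assoc, Matrix.mul_one, Matrix.one_mul]
    abel
  rw [hU1, sub_self, add_zero] at key
  -- norm bounds for the pieces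
  have hEd_le : frobNorm Ed ≤ frobNorm E + frobNorm F := by
    rw [hEddef, add_comm (frobNorm E)]
    exact frobNorm_add_le F E
  have hE1le : frobNorm E1 ≤ frobNorm E + frobNorm F :=
    le_trans (by rw [hE1def]; exact frobNorm_submatrix_le Ed g f hg hf) hEd_le
  have hE2le : frobNorm E2 ≤ frobNorm E + frobNorm F :=
    le_trans (by rw [hE2def]; exact frobNorm_submatrix_le Ed id f Function.injective_id hf)
      hEd_le
  have hE3le : frobNorm E3 ≤ frobNorm E + frobNorm F :=
    le_trans (by rw [hE3def]; exact frobNorm_submatrix_le Ed g id hg Function.injective_id)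
      hEd_le
  have hWs : specNorm W ≤ 1 := specNorm_orthonormal W hW
  have hVTs : specNorm Vᵀ ≤ 1 := by
    rw [specNorm_transpose]; exact specNorm_orthonormal V hV
  have hKs : specNorm K ≤ a := by
    rw [hKdef]
    exact (spec_mul W Wdag).trans (mul_le_of_le_one_left ha0 hWs)
  have hLs : specNorm L ≤ b := by
    rw [hLdef]
    refine (spec_mul Vdagᵀ Vᵀ).trans ?_
    rw [specNorm_transpose]
    exact mul_le_of_le_one_right hb0 hVTs
  have hQidem : (Udag * Ut) * (Udag * Ut) = Udag * Ut := by
    calc (Udag * Ut) * (Udag * Ut) = (Udag * Ut * Udag) * Ut := by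
          simp only [Matrix.mul_assoc]
      _ = Udag * Ut := by rw [hU2]
  have hQs : specNorm (Udag * Ut) ≤ 1 := specNorm_proj_le_one _ hU4 hQidem
  have hPidem : (Ut * Udag) * (Ut * Udag) = Ut * Udag := by
    calc (Ut * Udag) * (Ut * Udag) = (Ut * Udag * Ut) * Udag := by
          simp only [Matrix.mul_assoc]
      _ = Ut * Udag := by rw [hU1]
  have hPs : specNorm (Ut * Udag) ≤ 1 := specNorm_proj_le_one _ hU3 hPidem
  have h1Qsym : (1 - Udag * Ut)ᵀ = 1 - Udag * Ut := by
    rw [Matrix.transpose_sub, Matrix.transpose_one, hU4]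
  have h1Qidem : (1 - Udag * Ut) * (1 - Udag * Ut) = 1 - Udag * Ut := by
    have h5 : (1 - Udag * Ut) * (1 - Udag * Ut)
        = 1 - Udag * Ut - Udag * Ut + (Udag * Ut) * (Udag * Ut) := by
      simp only [Matrix.mul_sub, Matrix.sub_mul, Matrix.mul_one, Matrix.one_mul]
      abel
    rw [h5, hQidem]; abel
  have h1Qs : specNorm (1 - Udag * Ut) ≤ 1 := specNorm_proj_le_one _ h1Qsym h1Qidem
  have hQLs : specNorm ((Udag * Ut) * L) ≤ b := by
    refine (spec_mul _ _).trans ?_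
    calc specNorm (Udag * Ut) * specNorm L ≤ 1 * b :=
          mul_le_mul hQs hLs (specNorm_nonneg _) zero_le_one
      _ = b := one_mul b
  have h1QLs : specNorm ((1 - Udag * Ut) * L) ≤ b := by
    refine (spec_mul _ _).trans ?_
    calc specNorm (1 - Udag * Ut) * specNorm L ≤ 1 * b :=
          mul_le_mul h1Qs hLs (specNorm_nonneg _) zero_le_one
      _ = b := one_mul b
  -- per-term bounds
  have t1 : frobNorm (K * (E1 * ((1 - Udag * Ut) * L)))
      ≤ a * ((frobNorm E + frobNorm F) * b) :=
    frob_spec_chain _ _ hKs (frob_chain_spec _ _ hE1le h1QLs)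
  have t2 : frobNorm (K * ((Ut * Udag) * (E1 * L)))
      ≤ a * (1 * ((frobNorm E + frobNorm F) * b)) :=
    frob_spec_chain _ _ hKs (frob_spec_chain _ _ hPs (frob_chain_spec _ _ hE1le hLs))
  have t3 : frobNorm (K * (E1 * (Udag * (E1 * L))))
      ≤ a * ((frobNorm E + frobNorm F) * (u * ((frobNorm E + frobNorm F) * b))) :=
    frob_spec_chain _ _ hKs (frob_frob_chain _ _ hE1le
      (frob_spec_chain _ _ le_rfl (frob_chain_spec _ _ hE1le hLs)))
  have t4a : frobNorm (E2 * ((Udag * Ut) * L)) ≤ (frobNorm E + frobNorm F) * b :=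
    frob_chain_spec _ _ hE2le hQLs
  have t4b : frobNorm (E2 * (Udag * (E1 * L)))
      ≤ (frobNorm E + frobNorm F) * (u * ((frobNorm E + frobNorm F) * b)) :=
    frob_frob_chain _ _ hE2le
      (frob_spec_chain _ _ le_rfl (frob_chain_spec _ _ hE1le hLs))
  have t5a : frobNorm (K * ((Ut * Udag) * E3)) ≤ a * (1 * (frobNorm E + frobNorm F)) :=
    frob_spec_chain _ _ hKs (frob_spec_chain _ _ hPs hE3le)
  have t5b : frobNorm (K * (E1 * (Udag * E3)))
      ≤ a * ((frobNorm E + frobNorm F) * (u * (frobNorm E + frobNorm F))) :=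
    frob_spec_chain _ _ hKs (frob_frob_chain _ _ hE1le
      (frob_spec_chain _ _ le_rfl hE3le))
  have t6 : frobNorm (E2 * (Udag * E3))
      ≤ (frobNorm E + frobNorm F) * (u * (frobNorm E + frobNorm F)) :=
    frob_frob_chain _ _ hE2le (frob_spec_chain _ _ le_rfl hE3le)
  -- assemble
  rw [key]
  have g1 : frobNorm (-(K * (E1 * ((1 - Udag * Ut) * L))) + K * ((Ut * Udag) * (E1 * L)))
      ≤ a * ((frobNorm E + frobNorm F) * b) + a * (1 * ((frobNorm E + frobNorm F) * b)) :=
    (frobNorm_add_le _ _).trans (add_le_add ((frobNorm_neg _).le.trans t1) t2)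
  have g2 := (frobNorm_sub_le _ _).trans (add_le_add g1 t3)
  have g3 := (frobNorm_sub_le _ _).trans (add_le_add g2 t4a)
  have g4 := (frobNorm_add_le _ _).trans (add_le_add g3 t4b)
  have g5 := (frobNorm_sub_le _ _).trans (add_le_add g4 t5a)
  have g6 := (frobNorm_add_le _ _).trans (add_le_add g5 t5b)
  have g7 := (frobNorm_sub_le _ _).trans (add_le_add g6 t6)
  refine le_trans ((frobNorm_add_le _ _).trans (add_le_add le_rfl g7)) ?_
  nlinarith [mul_nonneg (mul_nonneg ha0 hb0) heps0, mul_nonneg ha0 hb0,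
    mul_nonneg hu0 heps0, mul_nonneg ha0 heps0, mul_nonneg hb0 heps0,
    mul_nonneg (mul_nonneg ha0 hu0) (mul_nonneg heps0 heps0),
    mul_nonneg (mul_nonneg hb0 hu0) (mul_nonneg heps0 heps0)]
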